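/- Let A be a bounded linear operator on a complex Banach space Y, ε > 0, and suppose λ ∈ ℂ is such that A − λI is invertible with ‖(A − λI)⁻¹‖ > 1/ε. Then there exists a bounded linear operator K on Y of rank at most 1 with ‖K‖ < ε such that λ is in the spectrum of A + K. -/

import Mathlib

set_option maxHeartbeats 800000
set_option synthInstance.maxHeartbeats 200000


/-- If `A - λI` is invertible on a complex Banach space with
`‖(A - λI)⁻¹‖ > 1/ε`, then there is a rank-one (rank at most one) perturbation
`K` with `‖K‖ < ε` such that `λ ∈ sp(A + K)`. -/
theorem exists_rank_one_perturbation_of_pseudospectrum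
    {Y : Type*} [NormedAddCommGroup Y] [NormedSpace ℂ Y] [CompleteSpace Y]
    (A : Y →L[ℂ] Y) (ε : ℝ) (hε : 0 < ε) (lam : ℂ)
    (hu : IsUnit (A - lam • (1 : Y →L[ℂ] Y)))
    (hn : 1 / ε < ‖Ring.inverse (A - lam • (1 : Y →L[ℂ] Y))‖) :
    ∃ K : Y →L[ℂ] Y,
      (∃ (φ : Y →L[ℂ] ℂ) (u : Y), ∀ x, K x = φ x • u) ∧
      ‖K‖ < ε ∧ lam ∈ spectrum ℂ (A + K) := by
  set T := A - lam • (1 : Y →L[ℂ] Y) with hT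
  set R := Ring.inverse T with hRdef
  have hx : ∃ x : Y, (1 / ε) * ‖x‖ < ‖R x‖ := by
    by_contra h
    push_neg at h
    have := ContinuousLinearMap.opNorm_le_bound R (by positivity) (fun x => h x)
    linarith
  obtain ⟨x, hx⟩ := hx
  set y := R x with hy
  have hy0 : 0 < ‖y‖ := lt_of_le_of_lt (by positivity) hx
  have hyne : y ≠ 0 := norm_pos_iff.mp hy0
  obtain ⟨φ, hφ1, hφy'⟩ := exists_dual_vector ℂ y (norm_ne_zero_iff.mpr hyne)
  have hφy : φ y = (‖y‖ : ℂ) := hφy'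
  have hyC : (‖y‖ : ℂ) ≠ 0 := by
    exact_mod_cast ne_of_gt hy0
  set K : Y →L[ℂ] Y := (-(‖y‖ : ℂ)⁻¹) • (φ.smulRight x) with hK
  have hKapp : ∀ z, K z = ((-(‖y‖ : ℂ)⁻¹) • φ) z • x := by
    intro z
    simp [hK, smul_smul]
  have hTy : T y = x := by
    have h1 : T * R = 1 := Ring.mul_inverse_cancel T hu
    have : (T * R) x = x := by rw [h1]; rfl
    simpa [ContinuousLinearMap.mul_apply] using this
  have hKy : K y = -x := by
    rw [hKapp]
    rw [ContinuousLinearMap.smul_apply, hφy]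
    rw [smul_eq_mul, neg_mul, inv_mul_cancel₀ hyC]
    simp
  have hxlt : ‖x‖ < ε * ‖y‖ := by
    have h2 := mul_lt_mul_of_pos_left hx hε
    calc ‖x‖ = ε * (1 / ε * ‖x‖) := by field_simp
      _ < ε * ‖y‖ := h2
  refine ⟨K, ⟨(-(‖y‖ : ℂ)⁻¹) • φ, x, hKapp⟩, ?_, ?_⟩
  · have hnorm : ‖K‖ = ‖y‖⁻¹ * ‖x‖ := by
      rw [hK]
      simp [norm_smul, ContinuousLinearMap.norm_smulRight_apply, hφ1]
    rw [hnorm]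
    rw [inv_mul_lt_iff₀ hy0]
    linarith
  · rw [spectrum.mem_iff]
    intro hunit
    have hSy : (algebraMap ℂ (Y →L[ℂ] Y) lam - (A + K)) y = 0 := by
      have hAy : A y - lam • y = x := by
        have := hTy
        simpa [hT, ContinuousLinearMap.sub_apply, ContinuousLinearMap.smul_apply] using this
      have : (algebraMap ℂ (Y →L[ℂ] Y) lam) y = lam • y := by
        simp [Algebra.algebraMap_eq_smul_one]
      rw [ContinuousLinearMap.sub_apply, this, ContinuousLinearMap.add_apply, hKy]
      rw [← hAy]
      abel
    obtain ⟨u, huu⟩ := hunit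
    have : y = 0 := by
      have h1 : (↑u⁻¹ * ↑u : Y →L[ℂ] Y) = 1 := by
        exact_mod_cast u.inv_mul
      calc y = ((↑u⁻¹ * ↑u : Y →L[ℂ] Y)) y := by rw [h1]; rfl
        _ = (↑u⁻¹ : Y →L[ℂ] Y) ((↑u : Y →L[ℂ] Y) y) := rfl
        _ = 0 := by rw [huu, hSy]; simp
    exact hyne this
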